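/- Let H be a 2k-dimensional complex vector space with symplectic basis μ_1, …, μ_k, λ_1, …, λ_k, let c : {1, …, k} → {1, …, n} be a surjective map (a coloring), and let d_1, …, d_k be real numbers. Set M = span_ℂ{μ_1, …, μ_k}, L = span_ℂ{λ_1, …, λ_k}, and let P be the complex span of the vectors μ_i − μ_j for all pairs i, j with c(i) = c(j), together with the vectors v_s = Σ_{i : c(i)=s} (λ_i + d_i μ_i) for each color s ∈ {1, …, n}. Then P is a Lagrangian subspace of H and the Maslov triple index satisfies τ(M, P, L) = Σ_{s=1}^n sign( Σ_{i : c(i)=s} d_i ). -/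

import Mathlib

open Complex

/-- A nondegenerate skew-Hermitian sesquilinear form (conjugate-linear in the
first variable, linear in the second). -/
structure IsSymplForm {H : Type*} [AddCommGroup H] [Module ℂ H] (ω : H → H → ℂ) : Prop where
  add_left : ∀ x y z : H, ω (x + y) z = ω x z + ω y z
  smul_left : ∀ (c : ℂ) (x y : H), ω (c • x) y = (starRingEnd ℂ) c * ω x y
  add_right : ∀ x y z : H, ω x (y + z) = ω x y + ω x z
  smul_right : ∀ (c : ℂ) (x y : H), ω x (c • y) = c * ω x y
  skew : ∀ x y : H, ω y x = -((starRingEnd ℂ) (ω x y))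
  nondeg : ∀ x : H, (∀ y : H, ω x y = 0) → x = 0

/-- A subspace is Lagrangian if it equals its orthogonal complement. -/
def IsLagrangian {H : Type*} [AddCommGroup H] [Module ℂ H]
    (ω : H → H → ℂ) (L : Submodule ℂ H) : Prop :=
  (L : Set H) = {x : H | ∀ l ∈ L, ω x l = 0}

/-- A choice of the `L1`-component of a decomposition of `x ∈ L1 ⊔ L2`. -/
noncomputable def firstPart {H : Type*} [AddCommGroup H] [Module ℂ H]
    (L1 L2 : Submodule ℂ H) (x : H) : H :=
  letI := Classical.propDecidable (x ∈ L1 ⊔ L2)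
  if hx : x ∈ L1 ⊔ L2 then Classical.choose (Submodule.mem_sup.mp hx) else 0

/-- The Maslov form of a triple of Lagrangians, computed via a choice of
decompositions: `ψ(a,b) = ω(a₁, b₂)`. -/
noncomputable def maslovForm {H : Type*} [AddCommGroup H] [Module ℂ H]
    (ω : H → H → ℂ) (L1 L2 : Submodule ℂ H) (a b : H) : ℂ :=
  ω (firstPart L1 L2 a) (b - firstPart L1 L2 b)

/-- The maximal dimension of a subspace of `W` on which `ψ` is positive definite. -/
noncomputable def posIndex {H : Type*} [AddCommGroup H] [Module ℂ H]
    (ψ : H → H → ℂ) (W : Submodule ℂ H) : ℕ :=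
  sSup {d : ℕ | ∃ S : Submodule ℂ H, S ≤ W ∧ Module.finrank ℂ S = d ∧
    ∀ x ∈ S, x ≠ 0 → 0 < (ψ x x).re}

/-- The maximal dimension of a subspace of `W` on which `ψ` is negative definite. -/
noncomputable def negIndex {H : Type*} [AddCommGroup H] [Module ℂ H]
    (ψ : H → H → ℂ) (W : Submodule ℂ H) : ℕ :=
  sSup {d : ℕ | ∃ S : Submodule ℂ H, S ≤ W ∧ Module.finrank ℂ S = d ∧
    ∀ x ∈ S, x ≠ 0 → (ψ x x).re < 0}

/-- The Maslov triple index: the signature of the Maslov form of `(L1, L2, L3)`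
on `(L1 ⊔ L2) ⊓ L3`. -/
noncomputable def maslovIndex {H : Type*} [AddCommGroup H] [Module ℂ H]
    (ω : H → H → ℂ) (L1 L2 L3 : Submodule ℂ H) : ℤ :=
  (posIndex (maslovForm ω L1 L2) ((L1 ⊔ L2) ⊓ L3) : ℤ) -
  (negIndex (maslovForm ω L1 L2) ((L1 ⊔ L2) ⊓ L3) : ℤ)

/-- The integer-valued sign of a real number, with `signZ 0 = 0`. -/
noncomputable def signZ (x : ℝ) : ℤ :=
  if 0 < x then 1 else if x < 0 then -1 else 0


namespace IsSymplForm

variable {H : Type*} [AddCommGroup H] [Module ℂ H] {ω : H → H → ℂ}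

noncomputable def toSesq (hω : IsSymplForm ω) : H →ₛₗ[starRingEnd ℂ] H →ₗ[ℂ] ℂ :=
  LinearMap.mk₂'ₛₗ (starRingEnd ℂ) (RingHom.id ℂ) ω hω.add_left
    (fun c x y => by rw [hω.smul_left]; rfl)
    hω.add_right (fun c x y => by rw [hω.smul_right]; rfl)

@[simp] lemma toSesq_apply (hω : IsSymplForm ω) (x y : H) : hω.toSesq x y = ω x y := rfl

lemma isotropic_span (hω : IsSymplForm ω) (S : Set H)
    (h : ∀ x ∈ S, ∀ y ∈ S, ω x y = 0) :
    ∀ x ∈ Submodule.span ℂ S, ∀ y ∈ Submodule.span ℂ S, ω x y = 0 := by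
  have step1 : ∀ x ∈ S, ∀ y ∈ Submodule.span ℂ S, ω x y = 0 := by
    intro x hx y hy
    have : Submodule.span ℂ S ≤ LinearMap.ker (hω.toSesq x) :=
      Submodule.span_le.mpr (fun z hz => by simpa using h x hx z hz)
    simpa using this hy
  intro x hx y hy
  have step2 : ∀ z ∈ S, ω x z = 0 := by
    intro z hz
    rw [hω.skew z x, step1 z hz x hx, map_zero, neg_zero]
  -- now x fixed, linear in second argument
  have : Submodule.span ℂ S ≤ LinearMap.ker (hω.toSesq x) :=
    Submodule.span_le.mpr (fun z hz => by simpa using step2 z hz)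
  simpa using this hy

end IsSymplForm

lemma firstPart_spec {H : Type*} [AddCommGroup H] [Module ℂ H]
    {L1 L2 : Submodule ℂ H} {x : H} (hx : x ∈ L1 ⊔ L2) :
    firstPart L1 L2 x ∈ L1 ∧ x - firstPart L1 L2 x ∈ L2 := by
  rw [firstPart, dif_pos hx]
  obtain ⟨hy, z, hz, hyz⟩ := Classical.choose_spec (Submodule.mem_sup.mp hx)
  exact ⟨hy, by rw [← eq_sub_of_add_eq' hyz]; exact hz⟩


lemma maslovForm_eq {H : Type*} [AddCommGroup H] [Module ℂ H] {ω : H → H → ℂ}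
    (hω : IsSymplForm ω) {M P : Submodule ℂ H}
    (hM : ∀ x ∈ M, ∀ y ∈ M, ω x y = 0) (hP : ∀ x ∈ P, ∀ y ∈ P, ω x y = 0)
    {x y x₁ y₁ : H} (hx : x ∈ M ⊔ P) (hy : y ∈ M ⊔ P)
    (hx₁ : x₁ ∈ M) (hx₂ : x - x₁ ∈ P) (hy₁ : y₁ ∈ M) (hy₂ : y - y₁ ∈ P) :
    maslovForm ω M P x y = ω x₁ (y - y₁) := by
  obtain ⟨hf1, hf2⟩ := firstPart_spec hx
  obtain ⟨hg1, hg2⟩ := firstPart_spec hy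
  set f := firstPart M P x
  set g := firstPart M P y
  have hfxM : f - x₁ ∈ M := sub_mem hf1 hx₁
  have hfxP : f - x₁ ∈ P := by
    have : f - x₁ = (x - x₁) - (x - f) := by abel
    rw [this]; exact sub_mem hx₂ hf2
  have hygM : y₁ - g ∈ M := sub_mem hy₁ hg1
  have key : ω f (y - g) = hω.toSesq (x₁ + (f - x₁)) ((y - y₁) + (y₁ - g)) := by
    congr 1 <;> abel
  rw [maslovForm, key]
  simp only [map_add, LinearMap.add_apply, IsSymplForm.toSesq_apply]
  rw [hM x₁ hx₁ _ hygM, hP _ hfxP _ hy₂, hM _ hfxM _ hygM]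
  ring

lemma posIndex_diag {H : Type*} [AddCommGroup H] [Module ℂ H] {n : ℕ}
    (ψ : H → H → ℂ) (W : Submodule ℂ H) (w : Fin n → H)
    (Φ : H →ₗ[ℂ] (Fin n → ℂ)) (D : Fin n → ℝ)
    (h1 : ∀ x ∈ W, x = ∑ s, (Φ x s) • w s)
    (h2 : ∀ a : Fin n → ℂ, (∑ s, a s • w s) ∈ W)
    (h3 : ∀ a : Fin n → ℂ, Φ (∑ s, a s • w s) = a)
    (h4 : ∀ a a' : Fin n → ℂ, ψ (∑ s, a s • w s) (∑ s, a' s • w s)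
        = ∑ s, (starRingEnd ℂ) (a s) * a' s * (D s : ℂ)) :
    posIndex ψ W = (Finset.univ.filter (fun s => 0 < D s)).card := by
  have hterm : ∀ (z : ℂ) (r : ℝ), ((starRingEnd ℂ) z * z * (r : ℂ)).re = normSq z * r := by
    intro z r
    rw [mul_comm ((starRingEnd ℂ) z) z, Complex.mul_conj, ← Complex.ofReal_mul]
    exact Complex.ofReal_re _
  have hre : ∀ a : Fin n → ℂ,
      (ψ (∑ s, a s • w s) (∑ s, a s • w s)).re = ∑ s, normSq (a s) * D s := by
    intro a
    rw [h4, Complex.re_sum]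
    exact Finset.sum_congr rfl fun s _ => hterm _ _
  have hw : LinearIndependent ℂ w := by
    rw [Fintype.linearIndependent_iff]
    intro g hg i
    have h := h3 g
    rw [hg, map_zero] at h
    exact (congrFun h i).symm
  have hwW : ∀ s, w s ∈ W := by
    intro s
    have : w s = ∑ t, (fun t => if t = s then (1 : ℂ) else 0) t • w t := by
      simp [ite_smul]
    rw [this]; exact h2 _
  apply IsGreatest.csSup_eq
  constructor
  · -- membership
    refine ⟨Submodule.span ℂ (Set.range (w ∘ (Subtype.val : {s : Fin n // 0 < D s} → Fin n))),
      ?_, ?_, ?_⟩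
    · rw [Submodule.span_le]
      rintro _ ⟨s, rfl⟩
      exact hwW s.val
    · rw [finrank_span_eq_card (hw.comp Subtype.val Subtype.val_injective)]
      exact Fintype.card_subtype _
    · intro x hx hx0
      rw [Submodule.mem_span_range_iff_exists_fun] at hx
      obtain ⟨aa, haa⟩ := hx
      set a : Fin n → ℂ := fun s => if h : 0 < D s then aa ⟨s, h⟩ else 0 with ha
      have e1 : ∑ s ∈ Finset.univ.filter (fun s => 0 < D s), a s • w s
          = ∑ s, a s • w s := by
        rw [Finset.sum_filter]
        refine Finset.sum_congr rfl fun s _ => ?_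
        by_cases h : 0 < D s
        · rw [if_pos h]
        · rw [if_neg h, ha]; simp [dif_neg h]
      have e2 : ∑ s ∈ Finset.univ.filter (fun s => 0 < D s), a s • w s
          = ∑ i : {s : Fin n // 0 < D s}, aa i • (w ∘ Subtype.val) i := by
        rw [Finset.sum_subtype (p := fun s => 0 < D s) _ (fun s => by simp) (fun s => a s • w s)]
        refine Finset.sum_congr rfl fun i _ => ?_
        rw [ha]; simp [dif_pos i.2]
      have hxa : x = ∑ s, a s • w s := by
        rw [← e1, e2]
        exact haa.symm
      have hane : ∃ s, a s ≠ 0 := by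
        by_contra h
        push_neg at h
        apply hx0
        rw [hxa]
        simp [h]
      obtain ⟨s, hs⟩ := hane
      have hDs : 0 < D s := by
        by_contra h
        rw [ha] at hs; simp [dif_neg h] at hs
      rw [hxa, hre]
      apply Finset.sum_pos'
      · intro t _
        by_cases h : 0 < D t
        · exact mul_nonneg (normSq_nonneg _) h.le
        · have : a t = 0 := by rw [ha]; simp [dif_neg h]
          simp [this]
      · exact ⟨s, Finset.mem_univ s, mul_pos (normSq_pos.mpr hs) hDs⟩
  · -- upper bound
    rintro m ⟨S, hSW, hfin, hdef⟩
    set Ψ : S →ₗ[ℂ] ({s : Fin n // 0 < D s} → ℂ) :=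
      LinearMap.pi (fun s => (LinearMap.proj s.val).comp (Φ.comp S.subtype)) with hΨ
    have hinj : Function.Injective Ψ := by
      rw [← LinearMap.ker_eq_bot]
      rw [LinearMap.ker_eq_bot']
      intro x hx
      have hxW : (x : H) ∈ W := hSW x.2
      have hxa : (x : H) = ∑ s, (Φ (x : H) s) • w s := h1 _ hxW
      have hzero : ∀ s : Fin n, 0 < D s → Φ (x : H) s = 0 := by
        intro s hs
        exact congrFun hx ⟨s, hs⟩
      by_contra hx0
      have hxne : (x : H) ≠ 0 := by
        simpa [Submodule.coe_eq_zero] using hx0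
      have hpos := hdef _ x.2 hxne
      have hle : (ψ (x : H) (x : H)).re ≤ 0 := by
        rw [hxa, hre]
        apply Finset.sum_nonpos
        intro t _
        by_cases h : 0 < D t
        · rw [hzero t h]; simp
        · exact mul_nonpos_of_nonneg_of_nonpos (normSq_nonneg _) (not_lt.mp h)
      exact absurd hpos (not_lt.mpr hle)
    calc m = Module.finrank ℂ S := hfin.symm
      _ ≤ Module.finrank ℂ ({s : Fin n // 0 < D s} → ℂ) :=
          LinearMap.finrank_le_finrank_of_injective hinj
      _ = Fintype.card {s : Fin n // 0 < D s} := Module.finrank_fintype_fun_eq_card ℂ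
      _ = (Finset.univ.filter (fun s => 0 < D s)).card := Fintype.card_subtype _


lemma negIndex_diag {H : Type*} [AddCommGroup H] [Module ℂ H] {n : ℕ}
    (ψ : H → H → ℂ) (W : Submodule ℂ H) (w : Fin n → H)
    (Φ : H →ₗ[ℂ] (Fin n → ℂ)) (D : Fin n → ℝ)
    (h1 : ∀ x ∈ W, x = ∑ s, (Φ x s) • w s)
    (h2 : ∀ a : Fin n → ℂ, (∑ s, a s • w s) ∈ W)
    (h3 : ∀ a : Fin n → ℂ, Φ (∑ s, a s • w s) = a)
    (h4 : ∀ a a' : Fin n → ℂ, ψ (∑ s, a s • w s) (∑ s, a' s • w s)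
        = ∑ s, (starRingEnd ℂ) (a s) * a' s * (D s : ℂ)) :
    negIndex ψ W = (Finset.univ.filter (fun s => D s < 0)).card := by
  have key : negIndex ψ W = posIndex (fun x y => -(ψ x y)) W := by
    unfold negIndex posIndex
    congr 1
    ext d
    constructor
    · rintro ⟨S, hS1, hS2, hS3⟩
      exact ⟨S, hS1, hS2, fun x hx hx0 => by simpa [neg_pos] using hS3 x hx hx0⟩
    · rintro ⟨S, hS1, hS2, hS3⟩
      refine ⟨S, hS1, hS2, fun x hx hx0 => ?_⟩
      have := hS3 x hx hx0
      simpa [neg_pos] using this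
  rw [key, posIndex_diag (fun x y => -(ψ x y)) W w Φ (fun s => -(D s)) h1 h2 h3
    (fun a a' => by show -ψ _ _ = _; rw [h4]; push_cast; rw [← Finset.sum_neg_distrib]; exact Finset.sum_congr rfl fun s _ => by ring)]
  congr 1
  ext s
  simp [neg_pos]

/-- For a coloring `c` and reals `d₁, …, d_k`, the subspace `P` spanned by the
differences `μᵢ - μⱼ` (for `c(i) = c(j)`) and the vectors
`v_s = ∑_{c(i)=s} (λᵢ + dᵢ μᵢ)` is Lagrangian, and
`τ(M, P, L) = ∑_s sign(∑_{c(i)=s} dᵢ)`. -/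
theorem maslovIndex_colored {H : Type*} [AddCommGroup H] [Module ℂ H]
    {k n : ℕ} (hk : 1 ≤ k)
    (b : Module.Basis (Fin k ⊕ Fin k) ℂ H) (μ lam : Fin k → H)
    (hμ : ∀ i, μ i = b (Sum.inl i)) (hlam : ∀ i, lam i = b (Sum.inr i))
    (ω : H → H → ℂ) (hω : IsSymplForm ω)
    (hμμ : ∀ i j, ω (μ i) (μ j) = 0)
    (hll : ∀ i j, ω (lam i) (lam j) = 0)
    (hml : ∀ i j, ω (μ i) (lam j) = if i = j then -1 else 0)
    (c : Fin k → Fin n) (hc : Function.Surjective c) (d : Fin k → ℝ)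
    (v : Fin n → H)
    (hv : ∀ s, v s = ∑ i ∈ Finset.univ.filter (fun i => c i = s),
      (lam i + (d i : ℂ) • μ i))
    (M L P : Submodule ℂ H)
    (hM : M = Submodule.span ℂ (Set.range μ))
    (hL : L = Submodule.span ℂ (Set.range lam))
    (hP : P = Submodule.span ℂ
      ({x : H | ∃ i j, c i = c j ∧ x = μ i - μ j} ∪ Set.range v)) :
    IsLagrangian ω P ∧
      maslovIndex ω M P L =
        ∑ s, signZ (∑ i ∈ Finset.univ.filter (fun i => c i = s), d i) := by
  classical
  -- chosen representative of each color
  have hi0 : ∀ s : Fin n, c ((hc s).choose) = s := fun s => (hc s).choose_spec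
  set i0 : Fin n → Fin k := fun s => (hc s).choose with hi0def
  -- algebraic helper lemmas for ω
  have hsumr : ∀ {ι : Type} (x : H) (t : Finset ι) (f : ι → H),
      ω x (∑ i ∈ t, f i) = ∑ i ∈ t, ω x (f i) := by
    intro ι x t f
    have h : ω x (∑ i ∈ t, f i) = (hω.toSesq x) (∑ i ∈ t, f i) := rfl
    rw [h, map_sum]; rfl
  have hsuml : ∀ {ι : Type} (t : Finset ι) (f : ι → H) (y : H),
      ω (∑ i ∈ t, f i) y = ∑ i ∈ t, ω (f i) y := by
    intro ι t f y
    have h : ω (∑ i ∈ t, f i) y = (hω.toSesq (∑ i ∈ t, f i)) y := rfl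
    rw [h, map_sum, LinearMap.sum_apply]; rfl
  have hsub2 : ∀ x y z : H, ω x (y - z) = ω x y - ω x z := by
    intro x y z
    have h : ω x (y - z) = (hω.toSesq x) (y - z) := rfl
    rw [h, map_sub]; rfl
  have hsubl : ∀ x y z : H, ω (x - y) z = ω x z - ω y z := by
    intro x y z
    have h : ω (x - y) z = (hω.toSesq (x - y)) z := rfl
    rw [h, map_sub, LinearMap.sub_apply]; rfl
  have hnegl : ∀ x y : H, ω (-x) y = -(ω x y) := by
    intro x y
    have h : ω (-x) y = (hω.toSesq (-x)) y := rfl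
    rw [h, map_neg, LinearMap.neg_apply]; rfl
  -- basic pairings
  have hlm : ∀ i j, ω (lam i) (μ j) = if i = j then 1 else 0 := by
    intro i j
    rw [hω.skew (μ j) (lam i), hml]
    by_cases h : j = i
    · subst h; simp
    · rw [if_neg h, if_neg fun hh => h hh.symm]; simp
  -- membership of generators
  have hμM : ∀ i, μ i ∈ M := fun i => hM ▸ Submodule.subset_span ⟨i, rfl⟩
  have hlamL : ∀ i, lam i ∈ L := fun i => hL ▸ Submodule.subset_span ⟨i, rfl⟩
  have hvP : ∀ s, v s ∈ P := fun s => hP ▸ Submodule.subset_span (Or.inr ⟨s, rfl⟩)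
  have hdiffP : ∀ i j, c i = c j → μ i - μ j ∈ P := fun i j h =>
    hP ▸ Submodule.subset_span (Or.inl ⟨i, j, h, rfl⟩)
  -- ω of basis vectors against v
  have hμv : ∀ a t, ω (μ a) (v t) = if c a = t then -1 else 0 := by
    intro a t
    rw [hv, hsumr]
    have h1 : ∀ i ∈ Finset.univ.filter (fun i => c i = t),
        ω (μ a) (lam i + (d i : ℂ) • μ i) = if a = i then -1 else 0 := by
      intro i _
      rw [hω.add_right, hω.smul_right, hml, hμμ, mul_zero, add_zero]
    rw [Finset.sum_congr rfl h1, Finset.sum_ite_eq]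
    simp
  have hlamv : ∀ a t, ω (lam a) (v t) = if c a = t then (d a : ℂ) else 0 := by
    intro a t
    rw [hv, hsumr]
    have h1 : ∀ i ∈ Finset.univ.filter (fun i => c i = t),
        ω (lam a) (lam i + (d i : ℂ) • μ i) = if a = i then (d i : ℂ) else 0 := by
      intro i _
      rw [hω.add_right, hω.smul_right, hll, hlm, zero_add]
      split_ifs <;> ring
    rw [Finset.sum_congr rfl h1, Finset.sum_ite_eq]
    simp
  -- isotropy of M and P
  have hMiso : ∀ x ∈ M, ∀ y ∈ M, ω x y = 0 := by
    rw [hM]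
    exact hω.isotropic_span _ (by rintro x ⟨i, rfl⟩ y ⟨j, rfl⟩; exact hμμ i j)
  have hPiso : ∀ x ∈ P, ∀ y ∈ P, ω x y = 0 := by
    rw [hP]
    apply hω.isotropic_span
    have case1 : ∀ i j, c i = c j → ∀ t, ω (μ i - μ j) (v t) = 0 := by
      intro i j hij t
      rw [hsubl, hμv, hμv, hij, sub_self]
    intro x hx y hy
    rcases hx with ⟨i, j, hij, rfl⟩ | ⟨s, rfl⟩
    · rcases hy with ⟨p, q, hpq, rfl⟩ | ⟨t, rfl⟩
      · rw [hsubl, hsub2, hsub2, hμμ, hμμ, hμμ, hμμ]; ring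
      · exact case1 i j hij t
    · rcases hy with ⟨i, j, hij, rfl⟩ | ⟨t, rfl⟩
      · rw [hω.skew (μ i - μ j) (v s), case1 i j hij s, map_zero, neg_zero]
      · rw [hv s, hsuml]
        apply Finset.sum_eq_zero
        intro i _
        rw [hω.add_left, hω.smul_left, hlamv, hμv, Complex.conj_ofReal]
        split_ifs <;> ring
  -- coordinate formulas
  have hexp : ∀ x y, ω x y = (∑ i, (starRingEnd ℂ) (b.repr x (Sum.inl i)) * ω (μ i) y)
      + ∑ i, (starRingEnd ℂ) (b.repr x (Sum.inr i)) * ω (lam i) y := by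
    intro x y
    have e1 : ω x y = (hω.toSesq (∑ u, b.repr x u • b u)) y := by rw [b.sum_repr]; rfl
    rw [e1, map_sum, LinearMap.sum_apply]
    have e2 : ∀ u, ((starRingEnd ℂ) (b.repr x u) • hω.toSesq (b u)) y
        = (starRingEnd ℂ) (b.repr x u) * ω (b u) y := fun u => by
      rw [LinearMap.smul_apply, smul_eq_mul]; rfl
    calc ∑ u, (hω.toSesq (b.repr x u • b u)) y
        = ∑ u, (starRingEnd ℂ) (b.repr x u) * ω (b u) y := by
          refine Finset.sum_congr rfl fun u _ => ?_
          rw [map_smulₛₗ]; exact e2 u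
      _ = _ := by rw [Fintype.sum_sum_type]; simp only [hμ, hlam]
  have hxμ : ∀ x j, ω x (μ j) = (starRingEnd ℂ) (b.repr x (Sum.inr j)) := by
    intro x j
    rw [hexp]
    have hz : (∑ i, (starRingEnd ℂ) (b.repr x (Sum.inl i)) * ω (μ i) (μ j)) = 0 :=
      Finset.sum_eq_zero fun i _ => by rw [hμμ, mul_zero]
    rw [hz, zero_add]
    have h1 : ∀ i, (starRingEnd ℂ) (b.repr x (Sum.inr i)) * ω (lam i) (μ j)
        = if i = j then (starRingEnd ℂ) (b.repr x (Sum.inr i)) else 0 := fun i => by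
      rw [hlm]; split_ifs <;> ring
    rw [Finset.sum_congr rfl fun i _ => h1 i, Finset.sum_ite_eq' Finset.univ j]
    simp
  have hxlam : ∀ x j, ω x (lam j) = -(starRingEnd ℂ) (b.repr x (Sum.inl j)) := by
    intro x j
    rw [hexp]
    have hz : (∑ i, (starRingEnd ℂ) (b.repr x (Sum.inr i)) * ω (lam i) (lam j)) = 0 :=
      Finset.sum_eq_zero fun i _ => by rw [hll, mul_zero]
    rw [hz, add_zero]
    have h1 : ∀ i, (starRingEnd ℂ) (b.repr x (Sum.inl i)) * ω (μ i) (lam j)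
        = if i = j then -(starRingEnd ℂ) (b.repr x (Sum.inl i)) else 0 := fun i => by
      rw [hml]; split_ifs <;> ring
    rw [Finset.sum_congr rfl fun i _ => h1 i, Finset.sum_ite_eq' Finset.univ j]
    simp
  -- P is Lagrangian
  have hLagP : IsLagrangian ω P := by
    apply Set.eq_of_subset_of_subset
    · intro x hx
      exact fun l hl => hPiso x hx l hl
    · intro x hx
      simp only [Set.mem_setOf_eq] at hx
      -- colorwise-constant λ-coordinates
      have hβc : ∀ i j, c i = c j → b.repr x (Sum.inr i) = b.repr x (Sum.inr j) := by
        intro i j hij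
        have h0 := hx _ (hdiffP i j hij)
        rw [hsub2, hxμ, hxμ] at h0
        exact (starRingEnd ℂ).injective (sub_eq_zero.mp h0)
      have hαsum : ∀ s, (∑ i ∈ Finset.univ.filter (fun i => c i = s), b.repr x (Sum.inl i))
          = b.repr x (Sum.inr (i0 s)) * ∑ i ∈ Finset.univ.filter (fun i => c i = s), (d i : ℂ) := by
        intro s
        have h0 := hx _ (hvP s)
        rw [hv, hsumr] at h0
        have h1 : ∀ i ∈ Finset.univ.filter (fun i => c i = s),
            ω x (lam i + (d i : ℂ) • μ i)
            = -(starRingEnd ℂ) (b.repr x (Sum.inl i))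
              + (d i : ℂ) * (starRingEnd ℂ) (b.repr x (Sum.inr i)) := by
          intro i _
          rw [hω.add_right, hω.smul_right, hxμ, hxlam]
        rw [Finset.sum_congr rfl h1] at h0
        have h2 := congrArg (starRingEnd ℂ) h0
        rw [map_sum, map_zero] at h2
        simp only [map_add, map_neg, map_mul, Complex.conj_conj, Complex.conj_ofReal] at h2
        rw [Finset.sum_add_distrib, Finset.sum_neg_distrib] at h2
        have h3 : ∑ i ∈ Finset.univ.filter (fun i => c i = s), (d i : ℂ) * b.repr x (Sum.inr i)
            = b.repr x (Sum.inr (i0 s)) * ∑ i ∈ Finset.univ.filter (fun i => c i = s), (d i : ℂ) := by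
          rw [Finset.mul_sum]
          refine Finset.sum_congr rfl fun i hi => ?_
          rw [hβc i (i0 s) (by rw [(Finset.mem_filter.mp hi).2, hi0 s])]
          ring
        linear_combination h3 - h2
      -- basis expansion of x
      have hxrepr : x = (∑ i, b.repr x (Sum.inl i) • μ i) + ∑ i, b.repr x (Sum.inr i) • lam i := by
        have h0 := b.sum_repr x
        rw [Fintype.sum_sum_type] at h0
        simp only [← hμ, ← hlam] at h0
        exact h0.symm
      -- key sum identity
      have key : (∑ i, b.repr x (Sum.inl i) • μ i) + (∑ i, b.repr x (Sum.inr i) • lam i)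
          - (∑ i, b.repr x (Sum.inr (i0 (c i))) • (lam i + (d i : ℂ) • μ i))
          = ∑ i, (b.repr x (Sum.inl i) - b.repr x (Sum.inr (i0 (c i))) * (d i : ℂ)) • μ i := by
        rw [add_sub_assoc, ← Finset.sum_sub_distrib, ← Finset.sum_add_distrib]
        refine Finset.sum_congr rfl fun i _ => ?_
        rw [show b.repr x (Sum.inr i) = b.repr x (Sum.inr (i0 (c i))) from
          hβc _ _ (by rw [hi0])]
        module
      have hy' : (∑ s, b.repr x (Sum.inr (i0 s)) • v s)
          = ∑ i, b.repr x (Sum.inr (i0 (c i))) • (lam i + (d i : ℂ) • μ i) := by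
        rw [← Finset.sum_fiberwise Finset.univ c
          (fun i => b.repr x (Sum.inr (i0 (c i))) • (lam i + (d i : ℂ) • μ i))]
        refine Finset.sum_congr rfl fun s _ => ?_
        rw [hv, Finset.smul_sum]
        refine Finset.sum_congr rfl fun i hi => ?_
        rw [(Finset.mem_filter.mp hi).2]
      have hx_eq : x = (∑ i, (b.repr x (Sum.inl i) - b.repr x (Sum.inr (i0 (c i))) * (d i : ℂ)) • μ i)
          + ∑ s, b.repr x (Sum.inr (i0 s)) • v s := by
        calc x = (∑ i, b.repr x (Sum.inl i) • μ i) + ∑ i, b.repr x (Sum.inr i) • lam i := hxrepr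
          _ = (∑ i, (b.repr x (Sum.inl i) - b.repr x (Sum.inr (i0 (c i))) * (d i : ℂ)) • μ i)
              + ∑ i, b.repr x (Sum.inr (i0 (c i))) • (lam i + (d i : ℂ) • μ i) := by
                rw [← key]; abel
          _ = _ := by rw [hy']
      have hsum0 : ∀ s, (∑ i ∈ Finset.univ.filter (fun i => c i = s),
          (b.repr x (Sum.inl i) - b.repr x (Sum.inr (i0 (c i))) * (d i : ℂ))) = 0 := by
        intro s
        rw [Finset.sum_sub_distrib, hαsum s]
        have h3 : ∑ i ∈ Finset.univ.filter (fun i => c i = s),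
            b.repr x (Sum.inr (i0 (c i))) * (d i : ℂ)
            = b.repr x (Sum.inr (i0 s)) * ∑ i ∈ Finset.univ.filter (fun i => c i = s), (d i : ℂ) := by
          rw [Finset.mul_sum]
          refine Finset.sum_congr rfl fun i hi => ?_
          rw [(Finset.mem_filter.mp hi).2]
        rw [h3, sub_self]
      have hfirst : (∑ i, (b.repr x (Sum.inl i) - b.repr x (Sum.inr (i0 (c i))) * (d i : ℂ)) • μ i) ∈ P := by
        rw [← Finset.sum_fiberwise Finset.univ c
          (fun i => (b.repr x (Sum.inl i) - b.repr x (Sum.inr (i0 (c i))) * (d i : ℂ)) • μ i)]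
        refine sum_mem fun s _ => ?_
        have hdiffs : (∑ i ∈ Finset.univ.filter (fun i => c i = s),
            (b.repr x (Sum.inl i) - b.repr x (Sum.inr (i0 (c i))) * (d i : ℂ)) • μ i)
            = ∑ i ∈ Finset.univ.filter (fun i => c i = s),
            (b.repr x (Sum.inl i) - b.repr x (Sum.inr (i0 (c i))) * (d i : ℂ)) • (μ i - μ (i0 s)) := by
          have : (∑ i ∈ Finset.univ.filter (fun i => c i = s),
              (b.repr x (Sum.inl i) - b.repr x (Sum.inr (i0 (c i))) * (d i : ℂ)) • (μ i - μ (i0 s)))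
              = (∑ i ∈ Finset.univ.filter (fun i => c i = s),
                (b.repr x (Sum.inl i) - b.repr x (Sum.inr (i0 (c i))) * (d i : ℂ)) • μ i)
              - (∑ i ∈ Finset.univ.filter (fun i => c i = s),
                (b.repr x (Sum.inl i) - b.repr x (Sum.inr (i0 (c i))) * (d i : ℂ))) • μ (i0 s) := by
            rw [Finset.sum_smul, ← Finset.sum_sub_distrib]
            exact Finset.sum_congr rfl fun i _ => smul_sub _ _ _
          rw [this, hsum0, zero_smul, sub_zero]
        rw [hdiffs]
        refine sum_mem fun i hi => Submodule.smul_mem _ _ ?_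
        exact hdiffP i (i0 s) (by rw [(Finset.mem_filter.mp hi).2, hi0 s])
      rw [hx_eq]
      exact add_mem hfirst (sum_mem fun s _ => Submodule.smul_mem _ _ (hvP s))
  refine ⟨hLagP, ?_⟩
  -- structure of (M ⊔ P) ⊓ L
  set e : Fin n → H := fun s => ∑ i ∈ Finset.univ.filter (fun i => c i = s), (d i : ℂ) • μ i
    with he
  set wv : Fin n → H := fun s => ∑ i ∈ Finset.univ.filter (fun i => c i = s), lam i with hwv
  set D : Fin n → ℝ := fun s => ∑ i ∈ Finset.univ.filter (fun i => c i = s), d i with hD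
  set Φ : H →ₗ[ℂ] (Fin n → ℂ) := LinearMap.pi (fun s => b.coord (Sum.inr (i0 s))) with hΦ
  have hvwe : ∀ s, v s = wv s + e s := by
    intro s
    rw [hv, hwv, he, ← Finset.sum_add_distrib]
  have heM : ∀ s, e s ∈ M := fun s => sum_mem fun i _ => Submodule.smul_mem _ _ (hμM i)
  have hwvL : ∀ s, wv s ∈ L := fun s => sum_mem fun i _ => hlamL i
  have hwvMP : ∀ s, wv s ∈ M ⊔ P := by
    intro s
    have h1 : wv s = v s - e s := by rw [hvwe]; abel
    rw [h1]
    exact sub_mem (Submodule.mem_sup_right (hvP s)) (Submodule.mem_sup_left (heM s))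
  have hML0 : ∀ z, z ∈ M → z ∈ L → z = 0 := by
    have h1 : Set.range μ = ⇑b '' Set.range Sum.inl := by
      rw [show μ = ⇑b ∘ Sum.inl from funext hμ, Set.range_comp]
    have h2 : Set.range lam = ⇑b '' Set.range Sum.inr := by
      rw [show lam = ⇑b ∘ Sum.inr from funext hlam, Set.range_comp]
    have hdisj : Disjoint M L := by
      rw [hM, hL, h1, h2]
      refine b.linearIndependent.disjoint_span_image ?_
      rw [Set.disjoint_left]
      rintro _ ⟨i, rfl⟩ ⟨j, hj⟩
      cases hj
    exact fun z hz hz' => Submodule.disjoint_def.mp hdisj z hz hz'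
  have hΦwv : ∀ t, Φ (wv t) = fun s => if s = t then 1 else 0 := by
    intro t
    funext s
    rw [hΦ]
    rw [LinearMap.pi_apply]
    rw [hwv, map_sum]
    have h1 : ∀ i ∈ Finset.univ.filter (fun i => c i = t),
        (b.coord (Sum.inr (i0 s))) (lam i) = if i = i0 s then 1 else 0 := by
      intro i _
      rw [Module.Basis.coord_apply, hlam, b.repr_self, Finsupp.single_apply]
      simp [Sum.inr.injEq]
    rw [Finset.sum_congr rfl h1, Finset.sum_ite_eq' (Finset.univ.filter (fun i => c i = t)) (i0 s)]
    by_cases h : s = t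
    · subst h; simp [hi0]; exact hi0 s
    · have : ¬ (c (i0 s) = t) := by rw [hi0]; exact h
      simp [this, h]
  have hΦsum : ∀ a : Fin n → ℂ, Φ (∑ s, a s • wv s) = a := by
    intro a
    funext t
    rw [map_sum, Finset.sum_apply]
    have h1 : ∀ s, (Φ (a s • wv s)) t = if t = s then a s else 0 := by
      intro s
      rw [map_smul, Pi.smul_apply, hΦwv, smul_eq_mul]
      by_cases h : t = s <;> simp [h]
    rw [Finset.sum_congr rfl fun s _ => h1 s, Finset.sum_ite_eq]
    simp
  have h2W : ∀ a : Fin n → ℂ, (∑ s, a s • wv s) ∈ (M ⊔ P) ⊓ L := fun a =>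
    sum_mem fun s _ => Submodule.smul_mem _ _ (Submodule.mem_inf.mpr ⟨hwvMP s, hwvL s⟩)
  have h1W : ∀ x ∈ (M ⊔ P) ⊓ L, x = ∑ s, (Φ x s) • wv s := by
    intro x hx
    obtain ⟨hx1, hx2⟩ := Submodule.mem_inf.mp hx
    obtain ⟨m, hm, p, hp, hmp⟩ := Submodule.mem_sup.mp hx1
    rw [hP, Submodule.span_union] at hp
    obtain ⟨q, hq, r, hr, hqr⟩ := Submodule.mem_sup.mp hp
    have hqM : q ∈ M := by
      have hle : Submodule.span ℂ {x : H | ∃ i j, c i = c j ∧ x = μ i - μ j} ≤ M :=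
        Submodule.span_le.mpr (by rintro _ ⟨i, j, hij, rfl⟩; exact sub_mem (hμM i) (hμM j))
      exact hle hq
    rw [Submodule.mem_span_range_iff_exists_fun] at hr
    obtain ⟨a, ha⟩ := hr
    have hxa : x = ∑ s, a s • wv s := by
      have hsplit : (∑ s, a s • v s) = (∑ s, a s • wv s) + ∑ s, a s • e s := by
        rw [← Finset.sum_add_distrib]
        exact Finset.sum_congr rfl fun s _ => by rw [hvwe s, smul_add]
      have hz : x - (∑ s, a s • wv s) = (m + q) + ∑ s, a s • e s := by
        rw [← hmp, ← hqr, ← ha, hsplit]; abel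
      have hzM : x - (∑ s, a s • wv s) ∈ M := by
        rw [hz]
        exact add_mem (add_mem hm hqM) (sum_mem fun s _ => Submodule.smul_mem _ _ (heM s))
      have hzL : x - (∑ s, a s • wv s) ∈ L :=
        sub_mem hx2 (sum_mem fun s _ => Submodule.smul_mem _ _ (hwvL s))
      exact sub_eq_zero.mp (hML0 _ hzM hzL)
    have haΦ : Φ x = a := by rw [hxa, hΦsum]
    rw [haΦ]
    exact hxa
  -- the Maslov form on (M ⊔ P) ⊓ L is diagonal
  have hev : ∀ s t, ω (e s) (v t) = if s = t then -((D s : ℝ) : ℂ) else 0 := by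
    intro s t
    rw [he, hsuml]
    have h1 : ∀ i ∈ Finset.univ.filter (fun i => c i = s),
        ω ((d i : ℂ) • μ i) (v t) = if s = t then -(d i : ℂ) else 0 := by
      intro i hi
      rw [hω.smul_left, hμv, Complex.conj_ofReal, (Finset.mem_filter.mp hi).2]
      split_ifs <;> ring
    rw [Finset.sum_congr rfl h1]
    by_cases h : s = t
    · subst h
      rw [if_pos rfl, hD]
      push_cast
      rw [← Finset.sum_neg_distrib]
      exact Finset.sum_congr rfl fun i _ => by rw [if_pos rfl]
    · rw [if_neg h]
      exact Finset.sum_eq_zero fun i _ => by rw [if_neg h]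
  have hcomb : ∀ g : Fin n → ℂ, (∑ s, g s • wv s) - (-(∑ s, g s • e s)) = ∑ s, g s • v s := by
    intro g
    rw [sub_neg_eq_add, ← Finset.sum_add_distrib]
    exact Finset.sum_congr rfl fun s _ => by rw [hvwe s, smul_add]
  have h4W : ∀ a a' : Fin n → ℂ,
      maslovForm ω M P (∑ s, a s • wv s) (∑ s, a' s • wv s)
      = ∑ s, (starRingEnd ℂ) (a s) * a' s * ((D s : ℝ) : ℂ) := by
    intro a a'
    have hxMP : (∑ s, a s • wv s) ∈ M ⊔ P := sum_mem fun s _ => Submodule.smul_mem _ _ (hwvMP s)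
    have hyMP : (∑ s, a' s • wv s) ∈ M ⊔ P := sum_mem fun s _ => Submodule.smul_mem _ _ (hwvMP s)
    have hx1M : (-(∑ s, a s • e s)) ∈ M :=
      neg_mem (sum_mem fun s _ => Submodule.smul_mem _ _ (heM s))
    have hy1M : (-(∑ s, a' s • e s)) ∈ M :=
      neg_mem (sum_mem fun s _ => Submodule.smul_mem _ _ (heM s))
    have hx2P : (∑ s, a s • wv s) - (-(∑ s, a s • e s)) ∈ P := by
      rw [hcomb]; exact sum_mem fun s _ => Submodule.smul_mem _ _ (hvP s)
    have hy2P : (∑ s, a' s • wv s) - (-(∑ s, a' s • e s)) ∈ P := by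
      rw [hcomb]; exact sum_mem fun s _ => Submodule.smul_mem _ _ (hvP s)
    rw [maslovForm_eq hω hMiso hPiso hxMP hyMP hx1M hx2P hy1M hy2P]
    rw [hcomb, hnegl, hsuml]
    rw [← Finset.sum_neg_distrib]
    refine Finset.sum_congr rfl fun s _ => ?_
    rw [hω.smul_left, hsumr]
    have h1 : ∀ t ∈ (Finset.univ : Finset (Fin n)),
        ω (e s) (a' t • v t) = if s = t then a' t * -((D s : ℝ) : ℂ) else 0 := by
      intro t _
      rw [hω.smul_right, hev]
      split_ifs <;> ring
    rw [Finset.sum_congr rfl h1, Finset.sum_ite_eq]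
    simp only [Finset.mem_univ, if_true]
    ring
  -- compute both indices
  have hPos := posIndex_diag (maslovForm ω M P) ((M ⊔ P) ⊓ L) wv Φ D h1W h2W hΦsum h4W
  have hNeg := negIndex_diag (maslovForm ω M P) ((M ⊔ P) ⊓ L) wv Φ D h1W h2W hΦsum h4W
  show (posIndex (maslovForm ω M P) ((M ⊔ P) ⊓ L) : ℤ)
      - (negIndex (maslovForm ω M P) ((M ⊔ P) ⊓ L) : ℤ) = _
  rw [hPos, hNeg]
  have hsign : ∀ s : Fin n, signZ (D s)
      = (if 0 < D s then (1 : ℤ) else 0) - (if D s < 0 then 1 else 0) := by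
    intro s
    rcases lt_trichotomy 0 (D s) with h | h | h
    · simp [signZ, h, asymm h]
    · simp [signZ, ← h]
    · simp [signZ, h, asymm h]
  calc ((Finset.univ.filter (fun s => 0 < D s)).card : ℤ)
      - ((Finset.univ.filter (fun s => D s < 0)).card : ℤ)
      = ∑ s, ((if 0 < D s then (1 : ℤ) else 0) - (if D s < 0 then 1 else 0)) := by
        rw [Finset.sum_sub_distrib, Finset.sum_boole, Finset.sum_boole]
    _ = ∑ s, signZ (D s) := by
        exact Finset.sum_congr rfl fun s _ => (hsign s).symm
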